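/- Let Φ be an n × n symmetric positive semidefinite matrix with eigenvalues σ₁ ≥ ... ≥ σ_n ≥ 0 and top-r eigenvector matrix Z_true (n × r, orthonormal columns), assuming σ_r > σ_{r+1}. For any n × r matrix Z with orthonormal columns, one exact noiseless power iteration Z₊ = QR(Φ Z) satisfies: the r-th principal angle does not increase, i.e., σ_r(Z₊ᵀ Z_true) ≥ σ_r(Zᵀ Z_true), provided σ_r(Zᵀ Z_true) > 0. -/

import Mathlib

open scoped BigOperators

/-- Euclidean norm of a finite real vector. -/
noncomputable def euclNorm {ι : Type*} [Fintype ι] (v : ι → ℝ) : ℝ :=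
  Real.sqrt (∑ i, (v i) ^ 2)

/-- Frobenius norm of a real matrix. -/
noncomputable def frobNorm {ι κ : Type*} [Fintype ι] [Fintype κ] (M : Matrix ι κ ℝ) : ℝ :=
  Real.sqrt (∑ i, ∑ j, (M i j) ^ 2)

/-- Operator (spectral) norm of a real matrix: the largest singular value. -/
noncomputable def specNorm {ι κ : Type*} [Fintype ι] [Fintype κ] (M : Matrix ι κ ℝ) : ℝ :=
  sSup {c | ∃ v : κ → ℝ, euclNorm v = 1 ∧ c = euclNorm (M.mulVec v)}

/-- Smallest singular value of a (tall or square) real matrix: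
the infimum of `‖M v‖` over unit vectors `v`. -/
noncomputable def sminNorm {ι κ : Type*} [Fintype ι] [Fintype κ] (M : Matrix ι κ ℝ) : ℝ :=
  sInf {c | ∃ v : κ → ℝ, euclNorm v = 1 ∧ c = euclNorm (M.mulVec v)}

/-- The `k`-th largest singular value of a real matrix, via the Courant–Fischer
max–min characterization. -/
noncomputable def sval {ι κ : Type*} [Fintype ι] [Fintype κ] (M : Matrix ι κ ℝ) (k : ℕ) : ℝ :=
  sSup {c | ∃ V : Submodule ℝ (κ → ℝ), Module.finrank ℝ V = k ∧
    c = sInf {d | ∃ v ∈ V, euclNorm v = 1 ∧ d = euclNorm (M.mulVec v)}}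

set_option linter.unusedSectionVars false
namespace PowerIterAux

open Matrix

variable {ι κ : Type*} [Fintype ι] [Fintype κ] [DecidableEq κ]

lemma sumsq_nonneg (v : ι → ℝ) : 0 ≤ ∑ i, v i ^ 2 :=
  Finset.sum_nonneg fun _ _ => sq_nonneg _

lemma enorm_nonneg (v : ι → ℝ) : 0 ≤ euclNorm v := Real.sqrt_nonneg _

lemma enorm_sq (v : ι → ℝ) : euclNorm v ^ 2 = ∑ i, v i ^ 2 :=
  Real.sq_sqrt (sumsq_nonneg v)

lemma enorm_eq_one_iff {v : ι → ℝ} : euclNorm v = 1 ↔ ∑ i, v i ^ 2 = 1 :=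
  Real.sqrt_eq_one

lemma enorm_eq_zero_iff {v : ι → ℝ} : euclNorm v = 0 ↔ v = 0 := by
  rw [euclNorm, Real.sqrt_eq_zero (sumsq_nonneg v)]
  constructor
  · intro h
    funext i
    have := (Finset.sum_eq_zero_iff_of_nonneg (fun i _ => sq_nonneg (v i))).1 h i (Finset.mem_univ i)
    exact pow_eq_zero_iff (n := 2) (by norm_num) |>.1 this
  · intro h; simp [h]

lemma le_enorm_iff {c : ℝ} (hc : 0 ≤ c) (v : ι → ℝ) :
    c ≤ euclNorm v ↔ c ^ 2 ≤ ∑ i, v i ^ 2 :=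
  Real.le_sqrt hc (sumsq_nonneg v)

lemma enorm_smul {s : ℝ} (hs : 0 ≤ s) (y : ι → ℝ) : euclNorm (s • y) = s * euclNorm y := by
  rw [euclNorm, euclNorm, show ∑ i, (s • y) i ^ 2 = s ^ 2 * ∑ i, y i ^ 2 by
    rw [Finset.mul_sum]; exact Finset.sum_congr rfl fun i _ => by
      simp [Pi.smul_apply, smul_eq_mul]; ring,
    Real.sqrt_mul (sq_nonneg s), Real.sqrt_sq hs]

lemma dot_eq_sumsq (v : ι → ℝ) : v ⬝ᵥ v = ∑ i, v i ^ 2 := by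
  simp [dotProduct, sq]

/-- adjoint identity -/
lemma adj (A : Matrix ι κ ℝ) (x : κ → ℝ) (y : ι → ℝ) :
    (A *ᵥ x) ⬝ᵥ y = x ⬝ᵥ (Aᵀ *ᵥ y) := by
  rw [mulVec_transpose, dotProduct_comm, dotProduct_mulVec, dotProduct_comm]

/-- isometry: orthonormal columns preserve the sum of squares -/
lemma isoW {W : Matrix ι κ ℝ} (hW : Wᵀ * W = 1) (x : κ → ℝ) :
    ∑ i, (W *ᵥ x) i ^ 2 = ∑ j, x j ^ 2 := by
  rw [← dot_eq_sumsq, ← dot_eq_sumsq, adj, mulVec_mulVec, hW, one_mulVec]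

/-- Pythagoras -/
lemma pyth {W : Matrix ι κ ℝ} (hW : Wᵀ * W = 1) (x : κ → ℝ) {y : ι → ℝ}
    (hy : Wᵀ *ᵥ y = 0) :
    ∑ i, ((W *ᵥ x) i + y i) ^ 2 = ∑ j, x j ^ 2 + ∑ i, y i ^ 2 := by
  have horth : (W *ᵥ x) ⬝ᵥ y = 0 := by rw [adj, hy, dotProduct_zero]
  have : ∑ i, ((W *ᵥ x) i + y i) ^ 2
      = ∑ i, (W *ᵥ x) i ^ 2 + 2 * ((W *ᵥ x) ⬝ᵥ y) + ∑ i, y i ^ 2 := by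
    rw [dotProduct, Finset.mul_sum, ← Finset.sum_add_distrib, ← Finset.sum_add_distrib]
    exact Finset.sum_congr rfl fun i _ => by ring
  rw [this, horth, isoW hW]; ring

/-- contraction: `‖Wᵀ y‖ ≤ ‖y‖` squared version -/
lemma contract {W : Matrix ι κ ℝ} (hW : Wᵀ * W = 1) (y : ι → ℝ) :
    ∑ j, (Wᵀ *ᵥ y) j ^ 2 ≤ ∑ i, y i ^ 2 := by
  have hy : Wᵀ *ᵥ (y - W *ᵥ (Wᵀ *ᵥ y)) = 0 := by
    rw [mulVec_sub, mulVec_mulVec, hW, one_mulVec, sub_self]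
  have h := pyth hW (Wᵀ *ᵥ y) hy
  have hdecomp : ∀ i, (W *ᵥ (Wᵀ *ᵥ y)) i + (y - W *ᵥ (Wᵀ *ᵥ y)) i = y i := by
    intro i; simp
  calc ∑ j, (Wᵀ *ᵥ y) j ^ 2
      ≤ ∑ j, (Wᵀ *ᵥ y) j ^ 2 + ∑ i, (y - W *ᵥ (Wᵀ *ᵥ y)) i ^ 2 := by
        nlinarith [sumsq_nonneg (y - W *ᵥ (Wᵀ *ᵥ y))]
    _ = ∑ i, ((W *ᵥ (Wᵀ *ᵥ y)) i + (y - W *ᵥ (Wᵀ *ᵥ y)) i) ^ 2 := h.symm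
    _ = ∑ i, y i ^ 2 := by simp

end PowerIterAux

section Aux2
open Matrix PowerIterAux

/-- the standard basis vector is a unit vector -/
lemma unit_exists {r : ℕ} (hr : 0 < r) : ∃ v : Fin r → ℝ, euclNorm v = 1 := by
  refine ⟨fun j => if j = ⟨0, hr⟩ then 1 else 0, ?_⟩
  rw [enorm_eq_one_iff]
  rw [Finset.sum_eq_single ⟨0, hr⟩]
  · simp
  · intro b _ hb; simp [hb]
  · simp

/-- For a square `r × r` matrix, `sval M r` is the smallest-singular-value infimum. -/
lemma sval_square {r : ℕ} (M : Matrix (Fin r) (Fin r) ℝ) :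
    sval M r = sInf {d | ∃ v : Fin r → ℝ, euclNorm v = 1 ∧ d = euclNorm (M.mulVec v)} := by
  have hset : {c | ∃ V : Submodule ℝ (Fin r → ℝ), Module.finrank ℝ V = r ∧
      c = sInf {d | ∃ v ∈ V, euclNorm v = 1 ∧ d = euclNorm (M.mulVec v)}}
      = {sInf {d | ∃ v : Fin r → ℝ, euclNorm v = 1 ∧ d = euclNorm (M.mulVec v)}} := by
    ext c
    simp only [Set.mem_setOf_eq, Set.mem_singleton_iff]
    constructor
    · rintro ⟨V, hV, rfl⟩
      have hVtop : V = ⊤ := Submodule.eq_top_of_finrank_eq (by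
        rw [hV, Module.finrank_fin_fun])
      subst hVtop
      congr 1
      ext d
      simp
    · intro h
      refine ⟨⊤, ?_, ?_⟩
      · rw [finrank_top, Module.finrank_fin_fun]
      · rw [h]; congr 1; ext d; simp
  rw [sval, hset, csSup_singleton]

/-- Homogeneous version of a lower bound over unit vectors. -/
lemma hom_of_unit {ι κ : Type*} [Fintype ι] [Fintype κ] {B : Matrix ι κ ℝ} {c : ℝ}
    (hc : 0 ≤ c) (h : ∀ v : κ → ℝ, euclNorm v = 1 → c ≤ euclNorm (B *ᵥ v)) :
    ∀ x : κ → ℝ, c * euclNorm x ≤ euclNorm (B *ᵥ x) := by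
  intro x
  rcases eq_or_ne x 0 with rfl | hx
  · rw [enorm_eq_zero_iff.2 rfl, mulVec_zero, mul_zero]
    exact enorm_nonneg _
  · have ht : 0 < euclNorm x := lt_of_le_of_ne (enorm_nonneg x)
      (fun h0 => hx (enorm_eq_zero_iff.1 h0.symm))
    have hv : euclNorm ((euclNorm x)⁻¹ • x) = 1 := by
      rw [PowerIterAux.enorm_smul (inv_nonneg.2 ht.le), inv_mul_cancel₀ ht.ne']
    have hb := h _ hv
    rw [mulVec_smul, PowerIterAux.enorm_smul (inv_nonneg.2 ht.le)] at hb
    calc c * euclNorm x ≤ ((euclNorm x)⁻¹ * euclNorm (B *ᵥ x)) * euclNorm x :=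
          mul_le_mul_of_nonneg_right hb ht.le
      _ = euclNorm (B *ᵥ x) := by field_simp

/-- transpose preserves lower bounds on the smallest singular value (square case) -/
lemma transpose_lb {r : ℕ} {A : Matrix (Fin r) (Fin r) ℝ} {c : ℝ} (hc : 0 < c)
    (h : ∀ v : Fin r → ℝ, euclNorm v = 1 → c ≤ euclNorm (A *ᵥ v)) :
    ∀ w : Fin r → ℝ, euclNorm w = 1 → c ≤ euclNorm (Aᵀ *ᵥ w) := by
  have hom := hom_of_unit hc.le h
  have hinj : Function.Injective (Matrix.toLin' A) := by
    intro x y hxy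
    have hz : A *ᵥ (x - y) = 0 := by
      rw [mulVec_sub]
      simp only [Matrix.toLin'_apply] at hxy
      rw [hxy, sub_self]
    have hle := hom (x - y)
    rw [hz, enorm_eq_zero_iff.2 rfl] at hle
    have h0 : euclNorm (x - y) ≤ 0 := by nlinarith
    have := enorm_eq_zero_iff.1 (le_antisymm h0 (enorm_nonneg _))
    exact sub_eq_zero.1 this
  have hsurj : Function.Surjective (Matrix.toLin' A) :=
    LinearMap.injective_iff_surjective.1 hinj
  intro w hw
  obtain ⟨x, hx⟩ := hsurj w
  rw [Matrix.toLin'_apply] at hx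
  have hAx : euclNorm (A *ᵥ x) = 1 := by rw [hx, hw]
  have hct : c * euclNorm x ≤ 1 := by rw [← hAx]; exact hom x
  have hxpos : 0 < euclNorm x := by
    by_contra h'
    push_neg at h'
    have hx0 : x = 0 := enorm_eq_zero_iff.1 (le_antisymm h' (enorm_nonneg x))
    rw [hx0, mulVec_zero] at hx
    rw [← hx, enorm_eq_zero_iff.2 rfl] at hw
    norm_num at hw
  -- Cauchy-Schwarz
  have hdot : x ⬝ᵥ (Aᵀ *ᵥ w) = 1 := by
    rw [← adj, hx, dot_eq_sumsq, enorm_eq_one_iff.1 hw]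
  have hcs := Finset.sum_mul_sq_le_sq_mul_sq Finset.univ x (Aᵀ *ᵥ w)
  rw [show ∑ i, x i * (Aᵀ *ᵥ w) i = x ⬝ᵥ (Aᵀ *ᵥ w) from rfl, hdot] at hcs
  have h1 : (1 : ℝ) ≤ (euclNorm x) ^ 2 * (euclNorm (Aᵀ *ᵥ w)) ^ 2 := by
    rw [enorm_sq, enorm_sq]; simpa using hcs
  have hN := enorm_nonneg (Aᵀ *ᵥ w)
  have htn : 1 ≤ euclNorm x * euclNorm (Aᵀ *ᵥ w) := by nlinarith [mul_nonneg hxpos.le hN]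
  nlinarith [mul_le_mul_of_nonneg_left htn hc.le,
    mul_le_mul_of_nonneg_right hct hN]
end Aux2

set_option maxHeartbeats 1000000 in
open Matrix PowerIterAux in
/-- Monotonicity of the `r`-th principal angle under one exact power iteration:
for symmetric PSD `Φ` with invariant top-`r` eigenspace `Z_true` (eigenvalues
`d i`, all exceeding the bound `μ` of `Φ` on the orthogonal complement, i.e.
`σ_r > σ_{r+1}`), if `Φ Z = Z₊ R` is a QR decomposition then
`σ_r(Z₊ᵀ Z_true) ≥ σ_r(Zᵀ Z_true)` whenever `σ_r(Zᵀ Z_true) > 0`. -/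
theorem power_iteration_angle_monotone {n r : ℕ}
    (Φ : Matrix (Fin n) (Fin n) ℝ) (hΦsym : Φ.transpose = Φ)
    (hΦpsd : Φ.PosSemidef)
    (Ztrue : Matrix (Fin n) (Fin r) ℝ) (hZt : Ztrue.transpose * Ztrue = 1)
    (d : Fin r → ℝ) (hinv : Φ * Ztrue = Ztrue * Matrix.diagonal d)
    (μ : ℝ) (hμ0 : 0 ≤ μ)
    (hcompl : ∀ v : Fin n → ℝ, Ztrue.transpose.mulVec v = 0 →
      euclNorm (Φ.mulVec v) ≤ μ * euclNorm v)
    (hgap : ∀ i, μ < d i)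
    (Z Zplus : Matrix (Fin n) (Fin r) ℝ) (hZ : Z.transpose * Z = 1)
    (R : Matrix (Fin r) (Fin r) ℝ)
    (hQR : Φ * Z = Zplus * R) (hZp : Zplus.transpose * Zplus = 1)
    (hRtri : ∀ i j : Fin r, j < i → R i j = 0) (hRdiag : ∀ i, 0 < R i i)
    (hpos : 0 < sval (Z.transpose * Ztrue) r) :
    sval (Z.transpose * Ztrue) r ≤ sval (Zplus.transpose * Ztrue) r := by
  classical
  rw [sval_square] at hpos ⊢
  rw [sval_square]
  rcases Nat.eq_zero_or_pos r with hr | hr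
  · exfalso
    subst hr
    have hempty : {d' : ℝ | ∃ v : Fin 0 → ℝ, euclNorm v = 1 ∧
        d' = euclNorm ((Z.transpose * Ztrue).mulVec v)} = ∅ := by
      ext x
      simp only [Set.mem_setOf_eq, Set.mem_empty_iff_false, iff_false, not_exists]
      intro v h
      obtain ⟨h1, -⟩ := h
      have h0 : euclNorm v = 0 := by rw [euclNorm]; simp
      rw [h0] at h1; norm_num at h1
    rw [hempty, Real.sInf_empty] at hpos
    exact lt_irrefl 0 hpos
  -- r > 0
  have hBdd : ∀ (M : Matrix (Fin r) (Fin r) ℝ),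
      BddBelow {d' : ℝ | ∃ v : Fin r → ℝ, euclNorm v = 1 ∧ d' = euclNorm (M.mulVec v)} := by
    intro M
    exact ⟨0, by rintro d' ⟨v, hv, rfl⟩; exact enorm_nonneg _⟩
  set c := sInf {d' : ℝ | ∃ v : Fin r → ℝ, euclNorm v = 1 ∧
      d' = euclNorm ((Z.transpose * Ztrue).mulVec v)} with hc
  have hlow : ∀ v : Fin r → ℝ, euclNorm v = 1 → c ≤ euclNorm ((Zᵀ * Ztrue) *ᵥ v) := by
    intro v hv
    exact csInf_le (hBdd _) ⟨v, hv, rfl⟩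
  obtain ⟨v0, hv0⟩ := unit_exists hr
  have hc1 : c ≤ 1 := by
    refine le_trans (hlow v0 hv0) ?_
    have h1 : ∑ i, ((Zᵀ * Ztrue) *ᵥ v0) i ^ 2 ≤ 1 := by
      rw [← mulVec_mulVec]
      calc ∑ i, (Zᵀ *ᵥ (Ztrue *ᵥ v0)) i ^ 2 ≤ ∑ i, (Ztrue *ᵥ v0) i ^ 2 := contract hZ _
        _ = ∑ i, v0 i ^ 2 := isoW hZt v0
        _ = 1 := enorm_eq_one_iff.1 hv0
    rw [euclNorm]
    calc Real.sqrt (∑ i, ((Zᵀ * Ztrue) *ᵥ v0) i ^ 2) ≤ Real.sqrt 1 :=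
      Real.sqrt_le_sqrt h1
      _ = 1 := Real.sqrt_one
  have htr : ∀ v : Fin r → ℝ, euclNorm v = 1 → c ≤ euclNorm ((Ztrueᵀ * Z) *ᵥ v) := by
    have h0 := transpose_lb hpos hlow
    simp only [Matrix.transpose_mul, Matrix.transpose_transpose] at h0
    exact h0
  have hTx : ∀ x : Fin r → ℝ, c * euclNorm x ≤ euclNorm ((Ztrueᵀ * Z) *ᵥ x) :=
    hom_of_unit hpos.le htr
  -- R is invertible
  have hdet : R.det = ∏ i, R i i :=
    Matrix.det_of_upperTriangular (fun i j hij => hRtri i j hij)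
  have hu : IsUnit R.det := by
    rw [isUnit_iff_ne_zero, hdet]
    exact (Finset.prod_pos (fun i _ => hRdiag i)).ne'
  have hRinv : R * R⁻¹ = 1 := Matrix.mul_nonsing_inv R hu
  -- core claim
  have hcore : ∀ w : Fin r → ℝ, euclNorm w = 1 → c ≤ euclNorm ((Ztrueᵀ * Zplus) *ᵥ w) := by
    intro w hw
    obtain ⟨b, hb⟩ : ∃ b : Fin r → ℝ, b = R⁻¹ *ᵥ w := ⟨_, rfl⟩
    have hRb : R *ᵥ b = w := by rw [hb, mulVec_mulVec, hRinv, one_mulVec]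
    obtain ⟨u, hudef⟩ : ∃ u : Fin n → ℝ, u = Z *ᵥ b := ⟨_, rfl⟩
    obtain ⟨a, hadef⟩ : ∃ a : Fin r → ℝ, a = Ztrueᵀ *ᵥ u := ⟨_, rfl⟩
    obtain ⟨e, he⟩ : ∃ e : Fin n → ℝ, e = u - Ztrue *ᵥ a := ⟨_, rfl⟩
    have hu_dec : Ztrue *ᵥ a + e = u := by rw [he]; abel
    have hZta : Ztrueᵀ *ᵥ (Ztrue *ᵥ a) = a := by
      rw [mulVec_mulVec, hZt, one_mulVec]
    have hZte : Ztrueᵀ *ᵥ e = 0 := by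
      rw [he, mulVec_sub, hZta, ← hadef, sub_self]
    have hZpw : Zplus *ᵥ w = Φ *ᵥ u := by
      rw [← hRb, mulVec_mulVec, ← hQR, ← mulVec_mulVec, ← hudef]
    have hΦZtr : Φ *ᵥ (Ztrue *ᵥ a) = Ztrue *ᵥ (Matrix.diagonal d *ᵥ a) := by
      rw [mulVec_mulVec, hinv, ← mulVec_mulVec]
    have hZtΦ : Ztrueᵀ * Φ = Matrix.diagonal d * Ztrueᵀ := by
      have h1 := congrArg Matrix.transpose hinv
      rw [transpose_mul, transpose_mul, hΦsym, Matrix.diagonal_transpose] at h1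
      exact h1
    have hZtΦe : Ztrueᵀ *ᵥ (Φ *ᵥ e) = 0 := by
      rw [mulVec_mulVec, hZtΦ, ← mulVec_mulVec, hZte, mulVec_zero]
    have hΦu : Φ *ᵥ u = Ztrue *ᵥ (Matrix.diagonal d *ᵥ a) + Φ *ᵥ e := by
      conv_lhs => rw [← hu_dec]
      rw [mulVec_add, hΦZtr]
    have htarget : (Ztrueᵀ * Zplus) *ᵥ w = Matrix.diagonal d *ᵥ a := by
      rw [← mulVec_mulVec, hZpw, hΦu, mulVec_add, hZtΦe, add_zero,
        mulVec_mulVec (Matrix.diagonal d *ᵥ a) Ztrueᵀ Ztrue, hZt, one_mulVec]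
    have hw1 : ∑ i, w i ^ 2 = 1 := enorm_eq_one_iff.1 hw
    have hF12 : (1 : ℝ) = (∑ i, (Matrix.diagonal d *ᵥ a) i ^ 2)
        + ∑ i, (Φ *ᵥ e) i ^ 2 := by
      have h1 : ∑ i, (Zplus *ᵥ w) i ^ 2 = 1 := by rw [isoW hZp, hw1]
      have h2 : ∑ i, (Zplus *ᵥ w) i ^ 2
          = (∑ i, (Matrix.diagonal d *ᵥ a) i ^ 2) + ∑ i, (Φ *ᵥ e) i ^ 2 := by
        rw [hZpw, hΦu]
        simpa using pyth hZt (Matrix.diagonal d *ᵥ a) hZtΦe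
      linarith
    have hF3 : ∑ i, (Φ *ᵥ e) i ^ 2 ≤ μ ^ 2 * ∑ i, e i ^ 2 := by
      have h1 := hcompl e hZte
      have h2 : (euclNorm (Φ *ᵥ e)) ^ 2 ≤ (μ * euclNorm e) ^ 2 :=
        pow_le_pow_left₀ (enorm_nonneg _) h1 2
      rw [enorm_sq, mul_pow, enorm_sq] at h2
      exact h2
    have hF4 : μ ^ 2 * ∑ i, a i ^ 2 ≤ ∑ i, (Matrix.diagonal d *ᵥ a) i ^ 2 := by
      rw [Finset.mul_sum]
      apply Finset.sum_le_sum
      intro i _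
      rw [mulVec_diagonal]
      have hdd : μ ^ 2 ≤ (d i) ^ 2 := by nlinarith [hgap i, hμ0]
      nlinarith [mul_nonneg (sub_nonneg.2 hdd) (sq_nonneg (a i))]
    have hab : (Ztrueᵀ * Z) *ᵥ b = a := by
      rw [← mulVec_mulVec, ← hudef, ← hadef]
    have hF5 : c ^ 2 * ((∑ i, a i ^ 2) + ∑ i, e i ^ 2) ≤ ∑ i, a i ^ 2 := by
      have h1 := hTx b
      rw [hab] at h1
      have h2 : (c * euclNorm b) ^ 2 ≤ (euclNorm a) ^ 2 :=
        pow_le_pow_left₀ (mul_nonneg hpos.le (enorm_nonneg b)) h1 2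
      rw [mul_pow, enorm_sq, enorm_sq] at h2
      have h3 : ∑ i, b i ^ 2 = (∑ i, a i ^ 2) + ∑ i, e i ^ 2 := by
        have hiso : ∑ i, u i ^ 2 = ∑ i, b i ^ 2 := by
          rw [hudef]; exact isoW hZ b
        have hp : ∑ i, u i ^ 2 = (∑ i, a i ^ 2) + ∑ i, e i ^ 2 := by
          conv_lhs => rw [← hu_dec]
          simpa using pyth hZt a hZte
        linarith
      rw [h3] at h2
      exact h2
    have hGnn : 0 ≤ ∑ i, (Matrix.diagonal d *ᵥ a) i ^ 2 := sumsq_nonneg _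
    have hSenn : 0 ≤ ∑ i, e i ^ 2 := sumsq_nonneg e
    have hSann : 0 ≤ ∑ i, a i ^ 2 := sumsq_nonneg a
    rw [htarget, le_enorm_iff hpos.le]
    have hc2 : (0:ℝ) ≤ 1 - c ^ 2 := by nlinarith [hc1, hpos.le]
    -- abbreviate the four sums by opaque scalars
    obtain ⟨G, hG⟩ : ∃ G : ℝ, G = ∑ i, (Matrix.diagonal d *ᵥ a) i ^ 2 := ⟨_, rfl⟩
    obtain ⟨P, hP⟩ : ∃ P : ℝ, P = ∑ i, (Φ *ᵥ e) i ^ 2 := ⟨_, rfl⟩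
    obtain ⟨Sa, hSa⟩ : ∃ Sa : ℝ, Sa = ∑ i, a i ^ 2 := ⟨_, rfl⟩
    obtain ⟨Se, hSe⟩ : ∃ Se : ℝ, Se = ∑ i, e i ^ 2 := ⟨_, rfl⟩
    rw [← hG, ← hP] at hF12
    rw [← hP, ← hSe] at hF3
    rw [← hSa, ← hG] at hF4
    rw [← hSa, ← hSe] at hF5
    rw [← hG] at hGnn
    rw [← hSe] at hSenn
    rw [← hSa] at hSann
    rw [← hG]
    have e0 : c ^ 2 * 1 = c ^ 2 * (G + P) := by rw [← hF12]
    have e1 : c ^ 2 * P ≤ c ^ 2 * (μ ^ 2 * Se) :=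
      mul_le_mul_of_nonneg_left hF3 (sq_nonneg c)
    have e2 : μ ^ 2 * (c ^ 2 * (Sa + Se)) ≤ μ ^ 2 * Sa :=
      mul_le_mul_of_nonneg_left hF5 (sq_nonneg μ)
    have e3 : (1 - c ^ 2) * (μ ^ 2 * Sa) ≤ (1 - c ^ 2) * G :=
      mul_le_mul_of_nonneg_left hF4 hc2
    nlinarith [e0, e1, e2, e3]
  have hfin := transpose_lb hpos hcore
  simp only [Matrix.transpose_mul, Matrix.transpose_transpose] at hfin
  apply le_csInf
  · exact ⟨euclNorm ((Zplusᵀ * Ztrue) *ᵥ v0), v0, hv0, rfl⟩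
  · rintro b ⟨w, hw, rfl⟩
    exact hfin w hw
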